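/- Σ_{n=1}^{∞} ζ(2n) / (n(2n+1)·4^n) = log π − 1. -/

import Mathlib

open Real Filter

/-- Real Riemann zeta values via the series `∑ 1/k^m`. -/
noncomputable def zetaR (m : ℕ) : ℝ := ∑' k : ℕ, 1 / ((k : ℝ) + 1) ^ m

private lemma inner_hasSum {x : ℝ} (hx0 : 0 < x) (hx1 : x < 1) :
    HasSum (fun n : ℕ => x ^ (2*n+2) / (((n:ℝ)+1) * (2*(n:ℝ)+3)))
      (2 - Real.log (1 - x^2) - (Real.log (1+x) - Real.log (1-x)) / x) := by
  have hx : x ≠ 0 := ne_of_gt hx0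
  have hxabs : |x| < 1 := by rwa [abs_of_pos hx0]
  have hx2 : |x^2| < 1 := by
    rw [abs_of_nonneg (sq_nonneg x)]; nlinarith
  have h1 : HasSum (fun n : ℕ => (x^2) ^ (n+1) / ((n:ℝ)+1)) (-Real.log (1 - x^2)) :=
    Real.hasSum_pow_div_log_of_abs_lt_one hx2
  have h2 : HasSum (fun k : ℕ => (2:ℝ) * (1/(2*(k:ℝ)+1)) * x ^ (2*k+1))
      (Real.log (1+x) - Real.log (1-x)) := Real.hasSum_log_sub_log_of_abs_lt_one hxabs
  have h3 := (hasSum_nat_add_iff' 1).mpr h2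
  simp only [Finset.range_one, Finset.sum_singleton] at h3
  have h4 := h1.sub (h3.div_const x)
  have hfun : (fun n : ℕ => x ^ (2*n+2) / (((n:ℝ)+1) * (2*(n:ℝ)+3))) =
      fun n : ℕ => (x^2) ^ (n+1) / ((n:ℝ)+1)
        - 2 * (1/(2*((n:ℝ)+1)+1)) * x ^ (2*(n+1)+1) / x := by
    funext n
    have hn1 : ((n:ℝ)+1) ≠ 0 := by positivity
    have hn3 : (2*((n:ℝ)+1)+1) ≠ 0 := by positivity
    rw [← pow_mul]
    field_simp
    ring
  rw [hfun]
  convert h4 using 1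
  · rfl
  · funext n; push_cast; ring
  · push_cast
    field_simp
    ring

private noncomputable def G (k : ℕ) : ℝ :=
  2 + 2*Real.log (2*((k:ℝ)+1)) + (2*(k:ℝ)+1)*Real.log (2*(k:ℝ)+1)
    - (2*(k:ℝ)+3)*Real.log (2*(k:ℝ)+3)

private lemma g_eq_G (k : ℕ) :
    2 - Real.log (1 - (1/(2*((k:ℝ)+1)))^2)
      - (Real.log (1+1/(2*((k:ℝ)+1))) - Real.log (1-1/(2*((k:ℝ)+1)))) / (1/(2*((k:ℝ)+1)))
      = G k := by
  have hm1 : (1:ℝ) ≤ (k:ℝ)+1 := by linarith [Nat.cast_nonneg (α:=ℝ) k]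
  set m : ℝ := (k:ℝ)+1 with hm
  have h1 : (0:ℝ) < 2*m-1 := by linarith
  have h2 : (0:ℝ) < 2*m := by linarith
  have h3 : (0:ℝ) < 2*m+1 := by linarith
  have e1 : 1 - (1/(2*m))^2 = ((2*m-1)*(2*m+1))/((2*m)*(2*m)) := by
    field_simp; ring
  have e2 : 1 + 1/(2*m) = (2*m+1)/(2*m) := by field_simp
  have e3 : 1 - 1/(2*m) = (2*m-1)/(2*m) := by field_simp
  rw [e1, e2, e3, Real.log_div (by positivity) (by positivity),
    Real.log_mul (ne_of_gt h1) (ne_of_gt h3), Real.log_mul (ne_of_gt h2) (ne_of_gt h2),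
    Real.log_div (ne_of_gt h3) (ne_of_gt h2), Real.log_div (ne_of_gt h1) (ne_of_gt h2)]
  have hG : G k = 2 + 2*Real.log (2*m) + (2*m-1)*Real.log (2*m-1)
      - (2*m+1)*Real.log (2*m+1) := by
    simp only [G]
    rw [hm]
    ring_nf
  rw [hG]
  field_simp
  ring

private noncomputable def F (N : ℕ) : ℝ :=
  2*(N:ℝ) + 2*(N:ℝ)*Real.log 2 + 2*Real.log (Nat.factorial N : ℝ)
    - (2*(N:ℝ)+1)*Real.log (2*(N:ℝ)+1)

private lemma sum_G (N : ℕ) : ∑ k ∈ Finset.range N, G k = F N := by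
  induction N with
  | zero => simp [F]
  | succ N ih =>
    rw [Finset.sum_range_succ, ih]
    have h1 : (Nat.factorial (N+1) : ℝ) = ((N:ℝ)+1) * (Nat.factorial N : ℝ) := by
      rw [Nat.factorial_succ]; push_cast; ring
    have h2 : Real.log ((Nat.factorial (N+1) : ℕ) : ℝ)
        = Real.log ((N:ℝ)+1) + Real.log (Nat.factorial N : ℝ) := by
      rw [h1, Real.log_mul (by positivity) (by exact_mod_cast (Nat.factorial_pos N).ne')]
    have h3 : Real.log (2*((N:ℝ)+1)) = Real.log 2 + Real.log ((N:ℝ)+1) :=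
      Real.log_mul two_ne_zero (by positivity)
    simp only [F, G, h2, h3]
    push_cast
    ring

private lemma F_eq (N : ℕ) (hN : 1 ≤ N) :
    F N = 2*Real.log (Stirling.stirlingSeq N)
      - 2*(N:ℝ)*Real.log (1+1/(2*(N:ℝ))) - Real.log (1+1/(2*(N:ℝ))) := by
  have hN0 : (0:ℝ) < N := by exact_mod_cast hN
  have hst := Stirling.log_stirlingSeq_formula N
  have h1 : Real.log ((N:ℝ)/Real.exp 1) = Real.log N - 1 := by
    rw [Real.log_div (ne_of_gt hN0) (Real.exp_ne_zero 1), Real.log_exp]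
  have h2 : Real.log (2*(N:ℝ)) = Real.log 2 + Real.log N :=
    Real.log_mul two_ne_zero (ne_of_gt hN0)
  have h3 : Real.log (1+1/(2*(N:ℝ))) = Real.log (2*(N:ℝ)+1) - Real.log (2*(N:ℝ)) := by
    rw [← Real.log_div (by positivity) (by positivity)]
    congr 1
    field_simp
  rw [hst, h1, h2] at *
  simp only [F, h3, h2]
  ring

private lemma F_tendsto : Filter.Tendsto F Filter.atTop (nhds (Real.log π - 1)) := by
  have hst : Filter.Tendsto (fun N => 2*Real.log (Stirling.stirlingSeq N)) Filter.atTop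
      (nhds (Real.log π)) := by
    have h0 : (0:ℝ) < Real.sqrt π := Real.sqrt_pos.mpr Real.pi_pos
    have := ((Real.continuousAt_log (ne_of_gt h0)).tendsto.comp
      Stirling.tendsto_stirlingSeq_sqrt_pi).const_mul (2:ℝ)
    rw [Real.log_sqrt Real.pi_pos.le] at this
    convert this using 2
    · rfl
    · ring
  have h2N : Filter.Tendsto (fun N : ℕ => 2*(N:ℝ)) Filter.atTop Filter.atTop := by
    apply Filter.Tendsto.const_mul_atTop two_pos
    exact tendsto_natCast_atTop_atTop
  have hmul : Filter.Tendsto (fun N : ℕ => 2*(N:ℝ)*Real.log (1+1/(2*(N:ℝ)))) Filter.atTop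
      (nhds 1) := by
    have := (Real.tendsto_mul_log_one_add_div_atTop 1).comp h2N
    exact this
  have hlog1 : Filter.Tendsto (fun N : ℕ => Real.log (1+1/(2*(N:ℝ)))) Filter.atTop
      (nhds 0) := by
    have hinv : Filter.Tendsto (fun N : ℕ => 1+1/(2*(N:ℝ))) Filter.atTop (nhds 1) := by
      have := h2N.inv_tendsto_atTop
      simpa [one_div] using tendsto_const_nhds.add this
    have := (Real.continuousAt_log one_ne_zero).tendsto.comp hinv
    simpa [Function.comp_def] using this
  have key : Filter.Tendsto (fun N : ℕ => 2*Real.log (Stirling.stirlingSeq N)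
      - 2*(N:ℝ)*Real.log (1+1/(2*(N:ℝ))) - Real.log (1+1/(2*(N:ℝ)))) Filter.atTop
      (nhds (Real.log π - 1 - 0)) := (hst.sub hmul).sub hlog1
  rw [sub_zero] at key
  apply key.congr'
  filter_upwards [Filter.eventually_ge_atTop 1] with N hN
  exact (F_eq N hN).symm

private noncomputable def A : ℕ × ℕ → ℝ :=
  fun p => (1/(2*((p.2:ℝ)+1)))^(2*p.1+2) / (((p.1:ℝ)+1)*(2*(p.1:ℝ)+3))

set_option maxHeartbeats 1000000 in
private lemma A_summable : Summable A := by
  have hf : Summable (fun n : ℕ => ((1:ℝ)/4)^n) :=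
    summable_geometric_of_lt_one (by norm_num) (by norm_num)
  have hg : Summable (fun k : ℕ => 1/((k:ℝ)+1)^2) := by
    have h := (summable_nat_add_iff 1).mpr (summable_one_div_nat_pow.mpr one_lt_two)
    apply h.congr
    intro k
    push_cast
    ring
  have hb : Summable (fun p : ℕ × ℕ => ((1:ℝ)/4)^p.1 * (1/((p.2:ℝ)+1)^2)) :=
    hf.mul_of_nonneg hg (fun n => by positivity) (fun k => by positivity)
  apply Summable.of_nonneg_of_le _ _ hb
  · intro p; unfold A; positivity
  · rintro ⟨n, k⟩
    unfold A
    simp only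
    have hk1 : (1:ℝ) ≤ (k:ℝ)+1 := by linarith [Nat.cast_nonneg (α:=ℝ) k]
    calc (1/(2*((k:ℝ)+1)))^(2*n+2) / (((n:ℝ)+1)*(2*(n:ℝ)+3))
        ≤ (1/(2*((k:ℝ)+1)))^(2*n+2) / 1 := by
          gcongr
          all_goals nlinarith [Nat.cast_nonneg (α:=ℝ) n,
            pow_nonneg (show (0:ℝ) ≤ 1/(2*((k:ℝ)+1)) by positivity) (2*n+2)]
      _ = ((1:ℝ)/2)^(2*n+2) * (1/((k:ℝ)+1))^(2*n+2) := by
          rw [div_one, ← mul_pow]; congr 1; field_simp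
      _ ≤ ((1:ℝ)/4)^n * (1/((k:ℝ)+1)^2) := by
          have e1 : ((1:ℝ)/2)^(2*n+2) = ((1:ℝ)/4)^n * (1/4) := by
            rw [show (2*n+2) = 2*(n+1) by ring, pow_mul]
            norm_num [pow_succ]
          have e2 : ((1:ℝ)/((k:ℝ)+1))^(2*n+2) ≤ (1/((k:ℝ)+1))^2 := by
            apply pow_le_pow_of_le_one (by positivity) _ (by omega)
            rw [div_le_one (by positivity)]
            exact hk1
          have e3 : ((1:ℝ)/((k:ℝ)+1))^2 = 1/((k:ℝ)+1)^2 := by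
            rw [div_pow, one_pow]
          rw [e1, ← e3]
          nlinarith [pow_nonneg (show (0:ℝ) ≤ 1/4 by norm_num) n,
            pow_nonneg (show (0:ℝ) ≤ 1/((k:ℝ)+1) by positivity) (2*n+2),
            pow_nonneg (show (0:ℝ) ≤ 1/((k:ℝ)+1) by positivity) 2]

theorem zeta_series_log_pi :
    ∑' n : ℕ, zetaR (2 * (n + 1)) /
      (((n : ℝ) + 1) * (2 * ((n : ℝ) + 1) + 1) * 4 ^ (n + 1)) = Real.log π - 1 := by
  have hA := A_summable.hasSum
  set S := ∑' p, A p with hSdef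
  -- fibers over n
  have hZ : ∀ n : ℕ, HasSum (fun k => A (n, k))
      (zetaR (2 * (n + 1)) / (((n : ℝ) + 1) * (2 * ((n : ℝ) + 1) + 1) * 4 ^ (n + 1))) := by
    intro n
    have hs : Summable (fun k : ℕ => 1/((k:ℝ)+1)^(2*(n+1))) := by
      have h := (summable_nat_add_iff 1).mpr
        (summable_one_div_nat_pow.mpr (show 1 < 2*(n+1) by omega))
      apply h.congr
      intro k
      push_cast
      ring
    have h1 : HasSum (fun k : ℕ => 1/((k:ℝ)+1)^(2*(n+1))) (zetaR (2*(n+1))) := hs.hasSum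
    have h2 := h1.div_const (((n:ℝ)+1) * (2*((n:ℝ)+1)+1) * 4^(n+1))
    have hfun : (fun k => A (n, k)) =
        fun k : ℕ => (1/((k:ℝ)+1)^(2*(n+1))) / (((n:ℝ)+1) * (2*((n:ℝ)+1)+1) * 4^(n+1)) := by
      funext k
      unfold A
      simp only
      have h4 : (4:ℝ)^(n+1) = 2^(2*n+2) := by
        rw [show (4:ℝ) = 2^2 by norm_num, ← pow_mul, show 2*(n+1) = 2*n+2 by ring]
      have hk : ((k:ℝ)+1) ≠ 0 := by positivity
      have hn1 : ((n:ℝ)+1) ≠ 0 := by positivity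
      have hn3 : (2*((n:ℝ)+1)+1) ≠ 0 := by positivity
      rw [h4, show 2*(n+1) = 2*n+2 by ring, div_pow, one_pow, mul_pow, div_div, div_div]
      congr 1
      ring
    rw [hfun]
    exact h2
  have hLHS := hA.prod_fiberwise hZ
  -- fibers over k
  have hA' : HasSum (fun p : ℕ × ℕ => A (p.2, p.1)) S :=
    (Equiv.prodComm ℕ ℕ).hasSum_iff.mpr hA
  have hGk : ∀ k : ℕ, HasSum (fun n => A (n, k)) (G k) := by
    intro k
    have hk1 : (1:ℝ) ≤ (k:ℝ)+1 := by linarith [Nat.cast_nonneg (α:=ℝ) k]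
    have hx0 : (0:ℝ) < 1/(2*((k:ℝ)+1)) := by positivity
    have hx1 : 1/(2*((k:ℝ)+1)) < 1 := by
      rw [div_lt_one (by positivity)]
      linarith
    have h := inner_hasSum hx0 hx1
    rw [g_eq_G k] at h
    exact h
  have hGS : HasSum G S := hA'.prod_fiberwise hGk
  have hT1 : Filter.Tendsto F Filter.atTop (nhds S) := by
    have := hGS.tendsto_sum_nat
    apply this.congr
    intro N
    exact sum_G N
  have hSval : S = Real.log π - 1 := tendsto_nhds_unique hT1 F_tendsto
  rw [hLHS.tsum_eq, hSval]
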